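/- Let M be a Markov process with state space S satisfying: there exists a probability measure π on S such that for every x ∈ S, lim_{t→∞} sup_{s ∈ T} ∫_S d_W(p^t(y,·), π) p^s(x,dy) = 0. Then the transition function is weak-* mean ergodic: for every μ ∈ P(S), the Cesàro averages (1/t) ∫_{[0,t)} ( ∫_S p^s(x,·) μ(dx) ) τ(ds) converge weakly to π as t → ∞. -/

import Mathlib

open MeasureTheory Filter Topology

/-- The `L¹`-Wasserstein (Kantorovich–Rubinstein) distance between two measures:
`d_W(μ,ν) = sup { |∫ f dμ - ∫ f dν| : f 1-Lipschitz }`. -/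
noncomputable def wassDist {S : Type*} [MeasurableSpace S] [PseudoMetricSpace S]
    (μ ν : Measure S) : ℝ :=
  ⨆ f : {g : S → ℝ // LipschitzWith 1 g}, |(∫ y, f.1 y ∂μ) - ∫ y, f.1 y ∂ν|

/-- A (normal, temporally homogeneous) discrete-time Markov process: a family of probability
measures `P x` on a sample space `Ω` depending measurably on the starting point `x`, a process
`M` such that `M 0 = x` holds `P x`-a.s., satisfying the Markov property with respect to the
natural filtration, with temporally homogeneous transition function `(P x).map (M t)`. -/
structure DiscreteMarkovProcess (S : Type*) [MeasurableSpace S]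
    (Ω : Type*) [MeasurableSpace Ω] where
  P : S → Measure Ω
  M : ℕ → Ω → S
  prob : ∀ x, IsProbabilityMeasure (P x)
  measM : ∀ n, Measurable (M n)
  measP : Measurable P
  start : ∀ x, (P x).map (M 0) = Measure.dirac x
  markov : ∀ (x : S) (s t : ℕ) (g : S → ℝ), Measurable g → (∃ C, ∀ z, |g z| ≤ C) →
    (P x)[(fun ω => g (M (s + t) ω)) |
        ⨆ u : {u : ℕ // u ≤ s}, MeasurableSpace.comap (M u.1) inferInstance]
      =ᵐ[P x] fun ω => ∫ y, g y ∂((P (M s ω)).map (M t))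

/-- The transition function `p t x (dy) = P^x (M_t ∈ dy)` of a discrete-time Markov process. -/
noncomputable def DiscreteMarkovProcess.p {S : Type*} [MeasurableSpace S]
    {Ω : Type*} [MeasurableSpace Ω] (X : DiscreteMarkovProcess S Ω) (n : ℕ) (x : S) :
    Measure S := (X.P x).map (X.M n)

/-- A (normal, temporally homogeneous) continuous-time Markov process: a family of probability
measures `P x` on a sample space `Ω` depending measurably on the starting point `x`, a process
`M`, progressively measurable with respect to its natural filtration, such that `M 0 = x` holds
`P x`-a.s., satisfying the Markov property with respect to the natural filtration, with
temporally homogeneous transition function `(P x).map (M t)`. -/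
structure ContinuousMarkovProcess (S : Type*) [MeasurableSpace S]
    (Ω : Type*) [MeasurableSpace Ω] where
  P : S → Measure Ω
  M : ℝ → Ω → S
  prob : ∀ x, IsProbabilityMeasure (P x)
  measM : ∀ t, Measurable (M t)
  measP : Measurable P
  prog : ∀ t : ℝ, 0 ≤ t →
    Measurable[MeasurableSpace.prod inferInstance
        (⨆ u : {u : ℝ // 0 ≤ u ∧ u ≤ t}, MeasurableSpace.comap (M u.1) inferInstance)]
      (fun q : Set.Icc (0 : ℝ) t × Ω => M q.1.1 q.2)
  start : ∀ x, (P x).map (M 0) = Measure.dirac x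
  markov : ∀ (x : S) (s t : ℝ), 0 ≤ s → 0 ≤ t → ∀ (g : S → ℝ), Measurable g →
    (∃ C, ∀ z, |g z| ≤ C) →
    (P x)[(fun ω => g (M (s + t) ω)) |
        ⨆ u : {u : ℝ // 0 ≤ u ∧ u ≤ s}, MeasurableSpace.comap (M u.1) inferInstance]
      =ᵐ[P x] fun ω => ∫ y, g y ∂((P (M s ω)).map (M t))

/-- The transition function `p t x (dy) = P^x (M_t ∈ dy)` of a continuous-time Markov process. -/
noncomputable def ContinuousMarkovProcess.p {S : Type*} [MeasurableSpace S]
    {Ω : Type*} [MeasurableSpace Ω] (X : ContinuousMarkovProcess S Ω) (t : ℝ) (x : S) :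
    Measure S := (X.P x).map (X.M t)

open scoped NNReal BoundedContinuousFunction

section Helpers

variable {S : Type*} [MeasurableSpace S] [MetricSpace S] [BorelSpace S]

lemma wassDist_nonneg' (μ ν : Measure S) : 0 ≤ wassDist μ ν :=
  Real.iSup_nonneg fun _ => abs_nonneg _

lemma lip_bounded (hd : ∀ x y : S, dist x y ≤ 1) {f : S → ℝ} {K : ℝ≥0}
    (hf : LipschitzWith K f) (z w : S) : |f z - f w| ≤ K := by
  have h1 := hf.dist_le_mul z w
  rw [Real.dist_eq] at h1
  calc |f z - f w| ≤ K * dist z w := h1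
    _ ≤ K * 1 := by gcongr; exact hd z w
    _ = K := mul_one _

lemma lip_integrable (hd : ∀ x y : S, dist x y ≤ 1) (μ : Measure S) [IsProbabilityMeasure μ]
    [Nonempty S] {f : S → ℝ} {K : ℝ≥0} (hf : LipschitzWith K f) : Integrable f μ := by
  obtain ⟨x₀⟩ := ‹Nonempty S›
  refine (integrable_const (|f x₀| + K)).mono' hf.continuous.aestronglyMeasurable ?_
  refine Eventually.of_forall fun z => ?_
  have h2 := lip_bounded hd hf z x₀
  have h3 : |f z| ≤ |f x₀| + |f z - f x₀| := by
    calc |f z| = |f x₀ + (f z - f x₀)| := by ring_nf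
      _ ≤ |f x₀| + |f z - f x₀| := abs_add_le _ _
  rw [Real.norm_eq_abs]
  linarith

lemma abs_integral_sub_le_two (hd : ∀ x y : S, dist x y ≤ 1) (μ ν : Measure S)
    [IsProbabilityMeasure μ] [IsProbabilityMeasure ν] [Nonempty S]
    {f : S → ℝ} (hf : LipschitzWith 1 f) :
    |(∫ y, f y ∂μ) - ∫ y, f y ∂ν| ≤ 2 := by
  obtain ⟨x₀⟩ := ‹Nonempty S›
  have key : ∀ (ρ : Measure S), IsProbabilityMeasure ρ → |(∫ y, f y ∂ρ) - f x₀| ≤ 1 := by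
    intro ρ hρ
    haveI := hρ
    have h1 : (∫ y, f y ∂ρ) - f x₀ = ∫ y, (f y - f x₀) ∂ρ := by
      rw [integral_sub (lip_integrable hd ρ hf) (integrable_const _), integral_const]
      simp
    rw [h1, ← Real.norm_eq_abs]
    calc ‖∫ y, (f y - f x₀) ∂ρ‖ ≤ 1 * (ρ Set.univ).toReal := by
          apply norm_integral_le_of_norm_le_const
          refine Eventually.of_forall fun z => ?_
          rw [Real.norm_eq_abs]
          simpa using lip_bounded hd hf z x₀
      _ = 1 := by simp
  calc |(∫ y, f y ∂μ) - ∫ y, f y ∂ν|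
      ≤ |(∫ y, f y ∂μ) - f x₀| + |f x₀ - ∫ y, f y ∂ν| := abs_sub_le _ _ _
    _ = |(∫ y, f y ∂μ) - f x₀| + |(∫ y, f y ∂ν) - f x₀| := by rw [abs_sub_comm (f x₀)]
    _ ≤ 2 := by linarith [key μ ‹_›, key ν ‹_›]

lemma wassDist_bddAbove (hd : ∀ x y : S, dist x y ≤ 1) (μ ν : Measure S)
    [IsProbabilityMeasure μ] [IsProbabilityMeasure ν] [Nonempty S] :
    BddAbove (Set.range fun f : {g : S → ℝ // LipschitzWith 1 g} =>
      |(∫ y, f.1 y ∂μ) - ∫ y, f.1 y ∂ν|) := by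
  refine ⟨2, ?_⟩
  rintro r ⟨f, rfl⟩
  exact abs_integral_sub_le_two hd μ ν f.2

lemma abs_le_wassDist (hd : ∀ x y : S, dist x y ≤ 1) (μ ν : Measure S)
    [IsProbabilityMeasure μ] [IsProbabilityMeasure ν] [Nonempty S]
    {f : S → ℝ} (hf : LipschitzWith 1 f) :
    |(∫ y, f y ∂μ) - ∫ y, f y ∂ν| ≤ wassDist μ ν :=
  le_ciSup (wassDist_bddAbove hd μ ν) (⟨f, hf⟩ : {g : S → ℝ // LipschitzWith 1 g})

lemma wassDist_le_two (hd : ∀ x y : S, dist x y ≤ 1) (μ ν : Measure S)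
    [IsProbabilityMeasure μ] [IsProbabilityMeasure ν] [Nonempty S] :
    wassDist μ ν ≤ 2 := by
  haveI : Nonempty {g : S → ℝ // LipschitzWith 1 g} := ⟨⟨fun _ => 0, LipschitzWith.const' 0⟩⟩
  exact ciSup_le fun f => abs_integral_sub_le_two hd μ ν f.2

lemma lipschitz_test (hd : ∀ x y : S, dist x y ≤ 1) (μ ν : Measure S)
    [IsProbabilityMeasure μ] [IsProbabilityMeasure ν] [Nonempty S]
    {f : S → ℝ} {K : ℝ≥0} (hf : LipschitzWith K f) :
    |(∫ y, f y ∂μ) - ∫ y, f y ∂ν| ≤ K * wassDist μ ν := by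
  rcases eq_or_ne K 0 with rfl | hK
  · obtain ⟨x₀⟩ := ‹Nonempty S›
    have hconst : f = fun _ => f x₀ := funext fun z => by
      have h1 := hf.dist_le_mul z x₀
      simp only [NNReal.coe_zero, zero_mul] at h1
      exact dist_le_zero.1 h1
    rw [hconst]
    simp
  · have hKpos : (0:ℝ) < K := by positivity
    have hglip : LipschitzWith 1 (fun x => (K:ℝ)⁻¹ * f x) := by
      apply LipschitzWith.of_dist_le_mul
      intro x y
      have h1 := hf.dist_le_mul x y
      rw [Real.dist_eq] at h1 ⊢
      have h2 : |(K:ℝ)⁻¹ * f x - (K:ℝ)⁻¹ * f y| = (K:ℝ)⁻¹ * |f x - f y| := by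
        rw [← mul_sub, abs_mul, abs_of_nonneg (by positivity)]
      rw [h2, NNReal.coe_one, one_mul]
      calc (K:ℝ)⁻¹ * |f x - f y| ≤ (K:ℝ)⁻¹ * (K * dist x y) := by gcongr
        _ = dist x y := by field_simp
    have h2 := abs_le_wassDist hd μ ν hglip
    rw [integral_const_mul, integral_const_mul, ← mul_sub, abs_mul,
      abs_of_nonneg (by positivity : (0:ℝ) ≤ (K:ℝ)⁻¹)] at h2
    calc |(∫ y, f y ∂μ) - ∫ y, f y ∂ν|
        = K * ((K:ℝ)⁻¹ * |(∫ y, f y ∂μ) - ∫ y, f y ∂ν|) := by field_simp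
      _ ≤ K * wassDist μ ν := by gcongr

lemma tendsto_integral_of_wassDist_tendsto [Nonempty S] (hd : ∀ x y : S, dist x y ≤ 1)
    {ι : Type*} {L : Filter ι} {ν : ι → Measure S} [hprob : ∀ i, IsProbabilityMeasure (ν i)]
    {π : Measure S} [IsProbabilityMeasure π]
    (h : Tendsto (fun i => wassDist (ν i) π) L (𝓝 0)) (f₀ : S →ᵇ ℝ) :
    Tendsto (fun i => ∫ x, f₀ x ∂(ν i)) L (𝓝 (∫ x, f₀ x ∂π)) := by
  rcases L.eq_or_neBot with rfl | hne
  · simp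
  apply BoundedContinuousFunction.tendsto_integral_of_forall_integral_le_liminf_integral
  intro f hf_nn
  have hfnn : ∀ y, 0 ≤ f y := fun y => hf_nn y
  have hfle : ∀ y, f y ≤ ‖f‖ := fun y =>
    le_trans (le_abs_self _) (by rw [← Real.norm_eq_abs]; exact f.norm_coe_le_norm y)
  set g : ℕ → S → ℝ := fun k x => ⨅ y, (f y + k * dist x y) with hgdef
  have hbdd : ∀ (k : ℕ) (x : S), BddBelow (Set.range fun y => f y + k * dist x y) := by
    intro k x
    refine ⟨0, ?_⟩
    rintro r ⟨y, rfl⟩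
    have := hfnn y
    positivity
  have hgle : ∀ k x, g k x ≤ f x := by
    intro k x
    have h1 := ciInf_le (hbdd k x) x
    simpa using h1
  have hkey : ∀ (k : ℕ) (x x' : S), g k x ≤ g k x' + k * dist x x' := by
    intro k x x'
    rw [← sub_le_iff_le_add]
    refine le_ciInf fun y => sub_le_iff_le_add.2 ?_
    calc g k x ≤ f y + k * dist x y := ciInf_le (hbdd k x) y
      _ ≤ f y + k * (dist x x' + dist x' y) := by
          gcongr
          exact dist_triangle x x' y
      _ = (f y + k * dist x' y) + k * dist x x' := by ring
  have hglip : ∀ k : ℕ, LipschitzWith (k : ℝ≥0) (g k) := by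
    intro k
    apply LipschitzWith.of_dist_le_mul
    intro x y
    rw [Real.dist_eq]
    have hcoe : (((k : ℝ≥0)) : ℝ) = (k:ℝ) := by simp
    rw [hcoe, abs_sub_le_iff]
    constructor
    · have := hkey k x y
      linarith
    · have h1 := hkey k y x
      rw [dist_comm y x] at h1
      linarith
  have hgnn : ∀ k x, 0 ≤ g k x := by
    intro k x
    refine le_ciInf fun y => ?_
    have := hfnn y
    positivity
  have hgmono : ∀ x, Monotone fun k => g k x := by
    intro x k k' hkk'
    refine le_ciInf fun y => ?_
    calc g k x ≤ f y + k * dist x y := ciInf_le (hbdd k x) y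
      _ ≤ f y + k' * dist x y := by gcongr <;> exact_mod_cast hkk'
  have hgbddA : ∀ x, BddAbove (Set.range fun k => g k x) := by
    intro x
    refine ⟨f x, ?_⟩
    rintro r ⟨k, rfl⟩
    exact hgle k x
  have hgtendsto : ∀ x, Tendsto (fun k => g k x) atTop (𝓝 (f x)) := by
    intro x
    have h1 := tendsto_atTop_ciSup (hgmono x) (hgbddA x)
    have h2 : (⨆ k, g k x) = f x := by
      apply le_antisymm (ciSup_le fun k => hgle k x)
      apply le_of_forall_pos_le_add
      intro ε hε
      obtain ⟨δ, hδ, hδ2⟩ := Metric.continuous_iff.1 f.continuous x ε hε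
      obtain ⟨k, hk⟩ := exists_nat_ge (‖f‖ / δ)
      have hstep : f x - ε ≤ g k x := by
        refine le_ciInf fun y => ?_
        by_cases hy : dist y x < δ
        · have h3 := hδ2 y hy
          rw [Real.dist_eq] at h3
          have h4 := abs_lt.1 h3
          have h5 : 0 ≤ (k:ℝ) * dist x y := by positivity
          linarith [h4.1]
        · push_neg at hy
          have h6 : ‖f‖ ≤ (k:ℝ) * dist x y := by
            calc ‖f‖ = (‖f‖/δ) * δ := by field_simp
              _ ≤ (k:ℝ) * dist x y := by
                  apply mul_le_mul hk ?_ hδ.le (by positivity)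
                  rwa [dist_comm]
          have h7 := hfle x
          have h8 := hfnn y
          linarith
      calc f x ≤ g k x + ε := by linarith
        _ ≤ (⨆ k, g k x) + ε := by gcongr; exact le_ciSup (hgbddA x) k
    rwa [h2] at h1
  have hgint : ∀ (ρ : Measure S), IsProbabilityMeasure ρ → ∀ k : ℕ, Integrable (g k) ρ := by
    intro ρ hρ k
    haveI := hρ
    exact lip_integrable hd ρ (hglip k)
  have hMCT : Tendsto (fun k => ∫ x, g k x ∂π) atTop (𝓝 (∫ x, f x ∂π)) :=
    integral_tendsto_of_tendsto_of_monotone (fun k => hgint π ‹_› k) (f.integrable π)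
      (Eventually.of_forall hgmono) (Eventually.of_forall hgtendsto)
  refine le_of_tendsto hMCT (Eventually.of_forall fun k => ?_)
  have hklim : Tendsto (fun i => ∫ x, g k x ∂(ν i)) L (𝓝 (∫ x, g k x ∂π)) := by
    rw [tendsto_iff_dist_tendsto_zero]
    refine squeeze_zero (g := fun i => (((k : ℝ≥0)) : ℝ) * wassDist (ν i) π)
      (fun i => dist_nonneg) (fun i => ?_) ?_
    · rw [Real.dist_eq]
      exact lipschitz_test hd (ν i) π (hglip k)
    · simpa using h.const_mul (((k : ℝ≥0)) : ℝ)
  rw [← hklim.liminf_eq]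
  apply Filter.liminf_le_liminf
  · exact Eventually.of_forall fun i =>
      integral_mono (hgint (ν i) (hprob i) k) (f.integrable (ν i)) (hgle k)
  · exact Filter.isBoundedUnder_of ⟨0, fun i => integral_nonneg (hgnn k)⟩
  · refine IsBoundedUnder.isCoboundedUnder_ge (Filter.isBoundedUnder_of ⟨‖f‖, fun i => ?_⟩)
    exact le_trans (le_abs_self _) (by rw [← Real.norm_eq_abs]; exact f.norm_integral_le_norm (ν i))

end Helpers


lemma cesaro_cont {ψ : ℝ → ℝ} {l C : ℝ}
    (hmeas : ∀ t : ℝ, MeasureTheory.IntegrableOn ψ (Set.Ico 0 t))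
    (hC : ∀ t, |ψ t| ≤ C)
    (h : Tendsto ψ atTop (𝓝 l)) :
    Tendsto (fun t => t⁻¹ * ∫ s in Set.Ico (0:ℝ) t, ψ s) atTop (𝓝 l) := by
  rw [Metric.tendsto_atTop] at h ⊢
  intro ε hε
  obtain ⟨T₀, hT₀⟩ := h (ε/4) (by linarith)
  set T : ℝ := max T₀ 0 with hTdef
  have hT0 : (0:ℝ) ≤ T := le_max_right _ _
  have hTbound : ∀ s, T ≤ s → |ψ s - l| ≤ ε/4 := fun s hs => by
    have h1 := hT₀ s (le_trans (le_max_left _ _) hs)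
    rw [Real.dist_eq] at h1
    linarith
  have hC0 : 0 ≤ C := le_trans (abs_nonneg _) (hC 0)
  set B : ℝ := (C + |l|) * T + 1 with hBdef
  have hB1 : (1:ℝ) ≤ B := by nlinarith [abs_nonneg l]
  refine ⟨max (max T 1) (4 * B / ε), fun t ht => ?_⟩
  have htT : T ≤ t := le_trans (le_trans (le_max_left T 1) (le_max_left _ _)) ht
  have ht1 : (1:ℝ) ≤ t := le_trans (le_trans (le_max_right T 1) (le_max_left _ _)) ht
  have htB : 4 * B / ε ≤ t := le_trans (le_max_right _ _) ht
  have htpos : (0:ℝ) < t := lt_of_lt_of_le one_pos ht1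
  have hint1 : MeasureTheory.IntegrableOn ψ (Set.Ico 0 T) := hmeas T
  have hint2 : MeasureTheory.IntegrableOn ψ (Set.Ico T t) :=
    (hmeas t).mono_set (Set.Ico_subset_Ico hT0 le_rfl)
  have hsplit : ∫ s in Set.Ico (0:ℝ) t, ψ s =
      (∫ s in Set.Ico (0:ℝ) T, ψ s) + ∫ s in Set.Ico T t, ψ s := by
    rw [← MeasureTheory.setIntegral_union (Set.Ico_disjoint_Ico_same)
      measurableSet_Ico hint1 hint2, Set.Ico_union_Ico_eq_Ico hT0 htT]
  haveI : IsFiniteMeasure (volume.restrict (Set.Ico T t)) := ⟨by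
    rw [MeasureTheory.Measure.restrict_apply_univ, Real.volume_Ico]
    exact ENNReal.ofReal_lt_top⟩
  have hvol2 : (volume (Set.Ico T t)).toReal = t - T := by
    rw [Real.volume_Ico, ENNReal.toReal_ofReal (by linarith)]
  have hD : ∫ s in Set.Ico T t, ψ s =
      (∫ s in Set.Ico T t, (ψ s - l)) + (t - T) * l := by
    have h2 : ∫ (_ : ℝ) in Set.Ico T t, l = (t - T) * l := by
      rw [MeasureTheory.setIntegral_const, measureReal_def, hvol2, smul_eq_mul]
    rw [MeasureTheory.integral_sub hint2 (integrable_const l), h2]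
    ring
  have e1 : |∫ s in Set.Ico (0:ℝ) T, ψ s| ≤ C * T := by
    have h3 := MeasureTheory.norm_setIntegral_le_of_norm_le_const (μ := volume)
      (s := Set.Ico (0:ℝ) T) (f := ψ) (C := C)
      (by rw [Real.volume_Ico]; exact ENNReal.ofReal_lt_top)
      (fun s _ => by rw [Real.norm_eq_abs]; exact hC s)
    rw [Real.norm_eq_abs, measureReal_def, Real.volume_Ico, ENNReal.toReal_ofReal (by linarith)] at h3
    simpa using h3
  have e2 : |∫ s in Set.Ico T t, (ψ s - l)| ≤ ε/4 * (t - T) := by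
    have h3 := MeasureTheory.norm_setIntegral_le_of_norm_le_const (μ := volume)
      (s := Set.Ico T t) (f := fun s => ψ s - l) (C := ε/4)
      (by rw [Real.volume_Ico]; exact ENNReal.ofReal_lt_top)
      (fun s hs => by rw [Real.norm_eq_abs]; exact hTbound s hs.1)
    rw [Real.norm_eq_abs, measureReal_def, hvol2] at h3
    exact h3
  set A := ∫ s in Set.Ico (0:ℝ) T, ψ s with hA
  set D := ∫ s in Set.Ico T t, (ψ s - l) with hDdef
  have heq : t⁻¹ * (∫ s in Set.Ico (0:ℝ) t, ψ s) - l = t⁻¹ * (A + D - T * l) := by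
    rw [hsplit, ← hDdef] at *
    rw [hD]
    field_simp
    ring
  show dist (t⁻¹ * ∫ s in Set.Ico (0:ℝ) t, ψ s) l < ε
  rw [Real.dist_eq, heq, abs_mul, abs_of_nonneg (inv_nonneg.2 htpos.le)]
  have habs : |A + D - T * l| ≤ C * T + ε/4 * (t - T) + T * |l| := by
    have hA' := abs_le.1 e1
    have hD' := abs_le.1 e2
    have hl1 : T * l ≤ T * |l| := mul_le_mul_of_nonneg_left (le_abs_self l) hT0
    have hl2 : -(T * |l|) ≤ T * l := by
      have h9 := mul_le_mul_of_nonneg_left (neg_abs_le l) hT0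
      linarith
    rw [abs_le]
    exact ⟨by linarith [hA'.1, hD'.1], by linarith [hA'.2, hD'.2]⟩
  have hfinal : t⁻¹ * (C * T + ε/4 * (t - T) + T * |l|) < ε := by
    rw [inv_mul_lt_iff₀ htpos]
    have h4B : 4 * B ≤ t * ε := by
      rw [div_le_iff₀ hε] at htB
      linarith
    have p1 : 0 ≤ ε * T := mul_nonneg hε.le hT0
    linarith [hBdef, h4B, p1, hB1]
  calc t⁻¹ * |A + D - T * l| ≤ t⁻¹ * (C * T + ε/4 * (t - T) + T * |l|) := by gcongr
    _ < ε := hfinal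


section MoreHelpers

variable {S : Type*} [MeasurableSpace S] [MetricSpace S] [BorelSpace S]

lemma integral_wassDist_le_two (hd : ∀ x y : S, dist x y ≤ 1) [Nonempty S]
    (π : Measure S) [IsProbabilityMeasure π]
    {pn : S → Measure S} (hpn : ∀ y, IsProbabilityMeasure (pn y)) (ρ : Measure S)
    [IsProbabilityMeasure ρ] :
    ∫ y, wassDist (pn y) π ∂ρ ≤ 2 := by
  calc ∫ y, wassDist (pn y) π ∂ρ ≤ ‖∫ y, wassDist (pn y) π ∂ρ‖ := le_abs_self _
    _ ≤ 2 * (ρ Set.univ).toReal := by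
        apply norm_integral_le_of_norm_le_const
        refine Eventually.of_forall fun y => ?_
        rw [Real.norm_eq_abs, abs_of_nonneg (wassDist_nonneg' _ _)]
        haveI := hpn y
        exact wassDist_le_two hd _ _
    _ = 2 := by simp

end MoreHelpers


/-- Under condition (1.6) the transition function is weak-* mean ergodic: for
every initial distribution `μ`, the Cesàro averages of `∫ p^s(x,·) μ(dx)` converge weakly to
`π` (tested against bounded continuous functions); discrete- and continuous-time cases. -/

theorem weak_star_mean_ergodic :
    (∀ (S : Type) [MeasurableSpace S] [MetricSpace S] [PolishSpace S] [BorelSpace S],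
      (∀ x y : S, dist x y ≤ 1) →
      ∀ (Ω : Type) [MeasurableSpace Ω] (X : DiscreteMarkovProcess S Ω)
        (π : Measure S) [IsProbabilityMeasure π],
      (∀ x : S, Tendsto
        (fun n : ℕ => ⨆ m : ℕ, ∫ y, wassDist (X.p n y) π ∂(X.p m x)) atTop (𝓝 0)) →
      ∀ (μ : Measure S) [IsProbabilityMeasure μ], ∀ g : S → ℝ, Continuous g → (∃ C : ℝ, ∀ z : S, |g z| ≤ C) →
      Tendsto
        (fun n : ℕ => (n : ℝ)⁻¹ * (∑ k ∈ Finset.range n, ∫ x, (∫ y, g y ∂(X.p k x)) ∂μ))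
        atTop (𝓝 (∫ y, g y ∂π)))
    ∧
    (∀ (S : Type) [MeasurableSpace S] [MetricSpace S] [PolishSpace S] [BorelSpace S],
      (∀ x y : S, dist x y ≤ 1) →
      ∀ (Ω : Type) [MeasurableSpace Ω] (X : ContinuousMarkovProcess S Ω)
        (π : Measure S) [IsProbabilityMeasure π],
      (∀ x : S, Tendsto
        (fun t : ℝ => ⨆ s : {s : ℝ // 0 ≤ s}, ∫ y, wassDist (X.p t y) π ∂(X.p s.1 x))
        atTop (𝓝 0)) →
      ∀ (μ : Measure S) [IsProbabilityMeasure μ], ∀ g : S → ℝ, Continuous g → (∃ C : ℝ, ∀ z : S, |g z| ≤ C) →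
      Tendsto
        (fun t : ℝ => t⁻¹ * (∫ s in Set.Ico (0 : ℝ) t, (∫ x, (∫ y, g y ∂(X.p s x)) ∂μ)))
        atTop (𝓝 (∫ y, g y ∂π))) := by
  constructor
  · -- discrete case
    intro S _ _ _ _ hd Ω _ X π _ hyp μ _ g hgc hgb
    haveI hne : Nonempty S := by
      by_contra hcon
      rw [not_nonempty_iff] at hcon
      have h1 : π Set.univ = 1 := measure_univ
      rw [Set.univ_eq_empty_iff.2 hcon, measure_empty] at h1
      exact zero_ne_one h1
    obtain ⟨C, hC⟩ := hgb
    haveI hPprob : ∀ x : S, IsProbabilityMeasure (X.P x) := X.prob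
    haveI hpprob : ∀ (n : ℕ) (x : S), IsProbabilityMeasure (X.p n x) := fun n x =>
      Measure.isProbabilityMeasure_map (X.measM n).aemeasurable
    haveI : MeasurableSingletonClass S := ⟨fun a => isClosed_singleton.measurableSet⟩
    have hwass : ∀ x : S, Tendsto (fun n => wassDist (X.p n x) π) atTop (𝓝 0) := by
      intro x
      refine squeeze_zero (fun n => wassDist_nonneg' _ _) (fun n => ?_) (hyp x)
      have h0 : X.p 0 x = Measure.dirac x := X.start x
      have h1 : wassDist (X.p n x) π = ∫ y, wassDist (X.p n y) π ∂(X.p 0 x) := by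
        rw [h0, integral_dirac]
      rw [h1]
      refine le_ciSup (f := fun m : ℕ => ∫ y, wassDist (X.p n y) π ∂(X.p m x)) ⟨2, ?_⟩ 0
      rintro r ⟨m, rfl⟩
      exact integral_wassDist_le_two hd π (fun y => hpprob n y) (X.p m x)
    set F : S →ᵇ ℝ := BoundedContinuousFunction.ofNormedAddCommGroup g hgc C
      (fun z => by rw [Real.norm_eq_abs]; exact hC z) with hF
    have hpt : ∀ x : S, Tendsto (fun n => ∫ y, g y ∂(X.p n x)) atTop (𝓝 (∫ y, g y ∂π)) :=
      fun x => tendsto_integral_of_wassDist_tendsto hd (hwass x) F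
    set κ : ProbabilityTheory.Kernel S Ω := ⟨X.P, X.measP⟩ with hκ
    haveI : ProbabilityTheory.IsMarkovKernel κ := ⟨fun x => X.prob x⟩
    have hmeas : ∀ n : ℕ, StronglyMeasurable fun x => ∫ y, g y ∂(X.p n x) := by
      intro n
      have h2 : (fun x => ∫ y, g y ∂(X.p n x)) = fun x => ∫ ω, g (X.M n ω) ∂(κ x) := by
        funext x
        show ∫ y, g y ∂((X.P x).map (X.M n)) = _
        rw [integral_map (X.measM n).aemeasurable hgc.aestronglyMeasurable]
        rfl
      rw [h2]
      exact MeasureTheory.StronglyMeasurable.integral_kernel_prod_right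
        (f := fun (_ : S) ω => g (X.M n ω))
        (((hgc.measurable.comp (X.measM n)).comp measurable_snd).stronglyMeasurable)
    have hb1 : ∀ (n : ℕ) (x : S), ‖∫ y, g y ∂(X.p n x)‖ ≤ C := by
      intro n x
      calc ‖∫ y, g y ∂(X.p n x)‖ ≤ C * ((X.p n x) Set.univ).toReal :=
            norm_integral_le_of_norm_le_const (Eventually.of_forall fun y => by
              rw [Real.norm_eq_abs]; exact hC y)
        _ = C := by simp
    have hdom : Tendsto (fun n => ∫ x, (∫ y, g y ∂(X.p n x)) ∂μ) atTop
        (𝓝 (∫ y, g y ∂π)) := by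
      have h3 := tendsto_integral_of_dominated_convergence (μ := μ)
        (F := fun n x => ∫ y, g y ∂(X.p n x)) (f := fun _ => ∫ y, g y ∂π)
        (bound := fun _ => C)
        (fun n => (hmeas n).aestronglyMeasurable)
        (integrable_const C)
        (fun n => Eventually.of_forall fun x => hb1 n x)
        (Eventually.of_forall hpt)
      simpa using h3
    simpa [smul_eq_mul] using hdom.cesaro
  · -- continuous case
    intro S _ _ _ _ hd Ω _ X π _ hyp μ _ g hgc hgb
    haveI hne : Nonempty S := by
      by_contra hcon
      rw [not_nonempty_iff] at hcon
      have h1 : π Set.univ = 1 := measure_univ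
      rw [Set.univ_eq_empty_iff.2 hcon, measure_empty] at h1
      exact zero_ne_one h1
    obtain ⟨C, hC⟩ := hgb
    haveI hPprob : ∀ x : S, IsProbabilityMeasure (X.P x) := X.prob
    haveI hpprob : ∀ (t : ℝ) (x : S), IsProbabilityMeasure (X.p t x) := fun t x =>
      Measure.isProbabilityMeasure_map (X.measM t).aemeasurable
    haveI : MeasurableSingletonClass S := ⟨fun a => isClosed_singleton.measurableSet⟩
    have hwass : ∀ x : S, Tendsto (fun t : ℝ => wassDist (X.p t x) π) atTop (𝓝 0) := by
      intro x
      refine squeeze_zero (fun t => wassDist_nonneg' _ _) (fun t => ?_) (hyp x)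
      have h0 : X.p 0 x = Measure.dirac x := X.start x
      have h1 : wassDist (X.p t x) π = ∫ y, wassDist (X.p t y) π ∂(X.p 0 x) := by
        rw [h0, integral_dirac]
      rw [h1]
      refine le_ciSup (f := fun s : {s : ℝ // 0 ≤ s} =>
        ∫ y, wassDist (X.p t y) π ∂(X.p s.1 x)) ⟨2, ?_⟩ ⟨0, le_refl 0⟩
      rintro r ⟨s, rfl⟩
      exact integral_wassDist_le_two hd π (fun y => hpprob t y) (X.p s.1 x)
    set F : S →ᵇ ℝ := BoundedContinuousFunction.ofNormedAddCommGroup g hgc C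
      (fun z => by rw [Real.norm_eq_abs]; exact hC z) with hF
    have hpt : ∀ x : S, Tendsto (fun t : ℝ => ∫ y, g y ∂(X.p t x)) atTop (𝓝 (∫ y, g y ∂π)) :=
      fun x => tendsto_integral_of_wassDist_tendsto hd (hwass x) F
    set κ : ProbabilityTheory.Kernel S Ω := ⟨X.P, X.measP⟩ with hκ
    haveI : ProbabilityTheory.IsMarkovKernel κ := ⟨fun x => X.prob x⟩
    have hmeas : ∀ t : ℝ, StronglyMeasurable fun x => ∫ y, g y ∂(X.p t x) := by
      intro t
      have h2 : (fun x => ∫ y, g y ∂(X.p t x)) = fun x => ∫ ω, g (X.M t ω) ∂(κ x) := by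
        funext x
        show ∫ y, g y ∂((X.P x).map (X.M t)) = _
        rw [integral_map (X.measM t).aemeasurable hgc.aestronglyMeasurable]
        rfl
      rw [h2]
      exact MeasureTheory.StronglyMeasurable.integral_kernel_prod_right
        (f := fun (_ : S) ω => g (X.M t ω))
        (((hgc.measurable.comp (X.measM t)).comp measurable_snd).stronglyMeasurable)
    have hb1 : ∀ (t : ℝ) (x : S), ‖∫ y, g y ∂(X.p t x)‖ ≤ C := by
      intro t x
      calc ‖∫ y, g y ∂(X.p t x)‖ ≤ C * ((X.p t x) Set.univ).toReal :=
            norm_integral_le_of_norm_le_const (Eventually.of_forall fun y => by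
              rw [Real.norm_eq_abs]; exact hC y)
        _ = C := by simp
    have hb2 : ∀ s : ℝ, ‖∫ x, (∫ y, g y ∂(X.p s x)) ∂μ‖ ≤ C := by
      intro s
      calc ‖∫ x, (∫ y, g y ∂(X.p s x)) ∂μ‖ ≤ C * (μ Set.univ).toReal :=
            norm_integral_le_of_norm_le_const (Eventually.of_forall fun x => hb1 s x)
        _ = C := by simp
    have hψtendsto : Tendsto (fun t : ℝ => ∫ x, (∫ y, g y ∂(X.p t x)) ∂μ) atTop
        (𝓝 (∫ y, g y ∂π)) := by
      have h3 := tendsto_integral_filter_of_dominated_convergence (μ := μ)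
        (F := fun (t : ℝ) x => ∫ y, g y ∂(X.p t x)) (f := fun _ => ∫ y, g y ∂π)
        (bound := fun _ => C)
        (Eventually.of_forall fun t => (hmeas t).aestronglyMeasurable)
        (Eventually.of_forall fun t => Eventually.of_forall fun x => hb1 t x)
        (integrable_const C)
        (Eventually.of_forall hpt)
      simpa using h3
    have hψmeas : ∀ t : ℝ, MeasureTheory.IntegrableOn
        (fun s => ∫ x, (∫ y, g y ∂(X.p s x)) ∂μ) (Set.Ico 0 t) := by
      intro t
      rcases le_or_gt t 0 with ht | ht
      · rw [Set.Ico_eq_empty (not_lt.2 ht)]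
        exact integrableOn_empty
      · haveI : IsFiniteMeasure (volume.restrict (Set.Ico (0:ℝ) t)) := ⟨by
          rw [MeasureTheory.Measure.restrict_apply_univ, Real.volume_Ico]
          exact ENNReal.ofReal_lt_top⟩
        have hM : Measurable fun q : Set.Icc (0:ℝ) t × Ω => X.M q.1.1 q.2 := by
          refine (X.prog t ht.le).mono ?_ le_rfl
          have hle : (⨆ u : {u : ℝ // 0 ≤ u ∧ u ≤ t},
              MeasurableSpace.comap (X.M u.1) inferInstance) ≤
              (inferInstance : MeasurableSpace Ω) :=
            iSup_le fun u => measurable_iff_comap_le.1 (X.measM u.1)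
          exact sup_le_sup le_rfl (MeasurableSpace.comap_mono hle)
        set κ' : ProbabilityTheory.Kernel (Set.Icc (0:ℝ) t × S) Ω :=
          ⟨fun q => X.P q.2, X.measP.comp measurable_snd⟩ with hκ'
        haveI : ProbabilityTheory.IsMarkovKernel κ' := ⟨fun q => X.prob q.2⟩
        have hΦ : StronglyMeasurable fun q : Set.Icc (0:ℝ) t × S =>
            ∫ ω, g (X.M q.1.1 ω) ∂(κ' q) := by
          refine MeasureTheory.StronglyMeasurable.integral_kernel_prod_right
            (f := fun (q : Set.Icc (0:ℝ) t × S) (ω : Ω) => g (X.M q.1.1 ω)) ?_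
          apply Measurable.stronglyMeasurable
          have h9 : Measurable fun p : (Set.Icc (0:ℝ) t × S) × Ω => (p.1.1, p.2) :=
            (measurable_fst.fst).prodMk measurable_snd
          exact (hgc.measurable.comp hM).comp h9
        have hΨ : StronglyMeasurable fun s : Set.Icc (0:ℝ) t =>
            ∫ x, (∫ ω, g (X.M s.1 ω) ∂(X.P x)) ∂μ := by
          exact MeasureTheory.StronglyMeasurable.integral_prod_right
            (f := fun (s : Set.Icc (0:ℝ) t) (x : S) => ∫ ω, g (X.M s.1 ω) ∂(X.P x))
            hΦ
        have hψeq : ∀ s : ℝ, (∫ x, (∫ y, g y ∂(X.p s x)) ∂μ)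
            = ∫ x, (∫ ω, g (X.M s ω) ∂(X.P x)) ∂μ := by
          intro s
          refine integral_congr_ae (Eventually.of_forall fun x => ?_)
          show ∫ y, g y ∂((X.P x).map (X.M s)) = _
          rw [integral_map (X.measM s).aemeasurable hgc.aestronglyMeasurable]
        have hmeas' : StronglyMeasurable fun s : ℝ =>
            ∫ x, (∫ ω, g (X.M ((Set.projIcc 0 t ht.le s) : ℝ) ω) ∂(X.P x)) ∂μ :=
          hΨ.comp_measurable continuous_projIcc.measurable
        have haes : AEStronglyMeasurable (fun s => ∫ x, (∫ y, g y ∂(X.p s x)) ∂μ)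
            (volume.restrict (Set.Ico (0:ℝ) t)) := by
          refine hmeas'.aestronglyMeasurable.congr ?_
          refine (MeasureTheory.ae_restrict_iff' measurableSet_Ico).2
            (Eventually.of_forall fun s hs => ?_)
          have hsmem : s ∈ Set.Icc (0:ℝ) t := ⟨hs.1, hs.2.le⟩
          beta_reduce
          rw [Set.projIcc_of_mem ht.le hsmem]
          exact (hψeq s).symm
        refine Integrable.mono' (integrable_const C) haes (Eventually.of_forall fun s => hb2 s)
    exact cesaro_cont hψmeas (fun s => by rw [← Real.norm_eq_abs]; exact hb2 s) hψtendsto
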